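/- Let P be a symmetric positive definite n×n real matrix, W a symmetric positive definite m×m real matrix, and A an m×n real matrix. Consider the set F of symmetric positive definite n×n matrices Π such that the block matrix [[P − Π, P Aᵀ], [A P, A P Aᵀ + W]] is positive semidefinite. Then the supremum of det Π over Π ∈ F equals det(P) · det(W) / det(A P Aᵀ + W), and it is attained at Π = (P⁻¹ + Aᵀ W⁻¹ A)⁻¹. -/

import Mathlib

open Matrix

/-- If `N ⪰ 0` then `det (1 + N) ≥ 1`. -/
lemma aux_det_one_add_psd {k : ℕ} {N : Matrix (Fin k) (Fin k) ℝ} (hN : N.PosSemidef) :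
    1 ≤ (1 + N).det := by
  have hH : N.IsHermitian := hN.1
  set U : Matrix (Fin k) (Fin k) ℝ := (hH.eigenvectorUnitary : Matrix (Fin k) (Fin k) ℝ)
    with hUdef
  have hU : U * star U = 1 := (Matrix.mem_unitaryGroup_iff).mp hH.eigenvectorUnitary.2
  have hofreal : (RCLike.ofReal ∘ hH.eigenvalues : Fin k → ℝ) = hH.eigenvalues := by
    funext i; simp
  have h1 : (1 : Matrix (Fin k) (Fin k) ℝ) + N
      = U * (1 + diagonal hH.eigenvalues) * star U := by
    rw [Matrix.mul_add, Matrix.mul_one, Matrix.add_mul, hU]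
    congr 1
    have hsp := hH.spectral_theorem
    rw [hofreal] at hsp
    exact hsp
  have h3 : U.det * (star U).det = 1 := by rw [← det_mul, hU, det_one]
  have h2 : (1 : Matrix (Fin k) (Fin k) ℝ) + diagonal hH.eigenvalues
      = diagonal (fun i => 1 + hH.eigenvalues i) := by
    rw [← diagonal_one, diagonal_add]
  have hd : (1 : ℝ) ≤ ((1 : Matrix (Fin k) (Fin k) ℝ) + diagonal hH.eigenvalues).det := by
    rw [h2, det_diagonal]
    calc (1 : ℝ) = ∏ _i : Fin k, (1 : ℝ) := by simp
      _ ≤ ∏ i : Fin k, (1 + hH.eigenvalues i) :=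
        Finset.prod_le_prod (fun i _ => zero_le_one)
          (fun i _ => by linarith [hN.eigenvalues_nonneg i])
  rw [h1, det_mul, det_mul]
  have h4 : U.det * ((1 : Matrix (Fin k) (Fin k) ℝ) + diagonal hH.eigenvalues).det *
      (star U).det = ((1 : Matrix (Fin k) (Fin k) ℝ) + diagonal hH.eigenvalues).det := by
    rw [mul_comm U.det, mul_assoc, h3, mul_one]
  rw [h4]
  exact hd

/-- Monotonicity of the determinant with respect to the Loewner order. -/
lemma aux_det_mono {k : ℕ} {Q M : Matrix (Fin k) (Fin k) ℝ} (hQ : Q.PosDef)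
    (h : (M - Q).PosSemidef) : Q.det ≤ M.det := by
  open scoped MatrixOrder in set R := CFC.sqrt Q with hRdef
  have hR : R * R = Q := by open scoped MatrixOrder in exact CFC.sqrt_mul_sqrt_self Q hQ.posSemidef.nonneg
  have hRps : R.PosSemidef := by open scoped MatrixOrder in exact (CFC.sqrt_nonneg Q).posSemidef
  have hdetR : R.det * R.det = Q.det := by rw [← det_mul, hR]
  have hRu : IsUnit R.det := by
    refine isUnit_iff_ne_zero.mpr fun h0 => ?_
    have := hQ.det_pos
    rw [← hdetR, h0, mul_zero] at this
    exact lt_irrefl _ this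
  have e1 : R * R⁻¹ = 1 := mul_nonsing_inv R hRu
  have e2 : R⁻¹ * R = 1 := nonsing_inv_mul R hRu
  have hRH : R⁻¹.IsHermitian := hRps.1.inv
  have hNps : (R⁻¹ * (M - Q) * R⁻¹).PosSemidef := by
    have := h.mul_mul_conjTranspose_same R⁻¹
    rwa [hRH.eq] at this
  have hM : M = R * (1 + R⁻¹ * (M - Q) * R⁻¹) * R := by
    rw [Matrix.mul_add, Matrix.mul_one, Matrix.add_mul, hR]
    have : R * (R⁻¹ * (M - Q) * R⁻¹) * R = M - Q := by
      simp only [← Matrix.mul_assoc, e1, Matrix.one_mul]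
      rw [Matrix.mul_assoc, e2, Matrix.mul_one]
    rw [this]
    abel
  have : M.det = Q.det * (1 + R⁻¹ * (M - Q) * R⁻¹).det := by
    conv_lhs => rw [hM]
    rw [det_mul, det_mul, ← hdetR]
    ring
  rw [this]
  exact le_mul_of_one_le_right hQ.det_pos.le (aux_det_one_add_psd hNps)

/-- Variational (max-det) characterization: over all symmetric positive definite `Π`
such that `[[P − Π, P Aᵀ], [A P, A P Aᵀ + W]] ⪰ 0`, the supremum of `det Π` equals
`det P · det W / det(A P Aᵀ + W)`, attained at `Π = (P⁻¹ + Aᵀ W⁻¹ A)⁻¹`.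
(`Pi` plays the role of `Π`.) -/
theorem stmt6 {n m : ℕ}
    (P : Matrix (Fin n) (Fin n) ℝ) (W : Matrix (Fin m) (Fin m) ℝ)
    (A : Matrix (Fin m) (Fin n) ℝ)
    (hP : P.PosDef) (hW : W.PosDef)
    (F : Set (Matrix (Fin n) (Fin n) ℝ))
    (hF : F = {Pi | Pi.PosDef ∧
      (Matrix.fromBlocks (P - Pi) (P * Aᵀ) (A * P) (A * P * Aᵀ + W)).PosSemidef}) :
    IsGreatest (Matrix.det '' F) (P.det * W.det / (A * P * Aᵀ + W).det) ∧
    (P⁻¹ + Aᵀ * W⁻¹ * A)⁻¹ ∈ F ∧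
    ((P⁻¹ + Aᵀ * W⁻¹ * A)⁻¹).det = P.det * W.det / (A * P * Aᵀ + W).det := by
  -- basic facts
  have hPu : IsUnit P.det := isUnit_iff_ne_zero.mpr hP.det_pos.ne'
  have hWu : IsUnit W.det := isUnit_iff_ne_zero.mpr hW.det_pos.ne'
  have hAt : Aᴴ = Aᵀ := conjTranspose_eq_transpose_of_trivial A
  have hAPAt : (A * P * Aᵀ).PosSemidef := by
    have := hP.posSemidef.mul_mul_conjTranspose_same A
    rwa [hAt] at this
  have hS : (A * P * Aᵀ + W).PosDef := Matrix.PosDef.posSemidef_add hAPAt hW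
  set S := A * P * Aᵀ + W with hSdef
  have hSu : IsUnit S.det := isUnit_iff_ne_zero.mpr hS.det_pos.ne'
  haveI : Invertible S := S.invertibleOfIsUnitDet hSu
  have hPinv : P⁻¹⁻¹ = P := nonsing_inv_nonsing_inv P hPu
  have hWinv : W⁻¹⁻¹ = W := nonsing_inv_nonsing_inv W hWu
  -- the sum P⁻¹ + AᵀW⁻¹A is positive definite
  have hAtWA : (Aᵀ * W⁻¹ * A).PosSemidef := by
    have := hW.inv.posSemidef.conjTranspose_mul_mul_same A
    rwa [hAt] at this
  have hSum : (P⁻¹ + Aᵀ * W⁻¹ * A).PosDef := hP.inv.add_posSemidef hAtWA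
  have hSumU : IsUnit (P⁻¹ + Aᵀ * W⁻¹ * A) :=
    (isUnit_iff_isUnit_det _).mpr (isUnit_iff_ne_zero.mpr hSum.det_pos.ne')
  have hPi0 : ((P⁻¹ + Aᵀ * W⁻¹ * A)⁻¹).PosDef := hSum.inv
  -- Woodbury identity
  have hwood : (P⁻¹ + Aᵀ * W⁻¹ * A)⁻¹ = P - P * Aᵀ * S⁻¹ * A * P := by
    have hA' : IsUnit P⁻¹ := (isUnit_iff_isUnit_det _).mpr
      (isUnit_iff_ne_zero.mpr hP.inv.det_pos.ne')
    have hC' : IsUnit W⁻¹ := (isUnit_iff_isUnit_det _).mpr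
      (isUnit_iff_ne_zero.mpr hW.inv.det_pos.ne')
    have hAC' : IsUnit (W⁻¹⁻¹ + A * P⁻¹⁻¹ * Aᵀ) := by
      rw [hPinv, hWinv]
      refine (isUnit_iff_isUnit_det _).mpr (isUnit_iff_ne_zero.mpr ?_)
      have : (W + A * P * Aᵀ).PosDef := hW.add_posSemidef hAPAt
      exact this.det_pos.ne'
    have := add_mul_mul_inv_eq_sub P⁻¹ Aᵀ W⁻¹ A hA' hC' hAC'
    rw [hPinv, hWinv] at this
    rw [this, hSdef, add_comm W (A * P * Aᵀ)]
  -- transpose fact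
  have hBH : (P * Aᵀ)ᴴ = A * P := by
    rw [conjTranspose_eq_transpose_of_trivial, transpose_mul, transpose_transpose]
    have hPt : Pᵀ = P := by
      have h := hP.1.eq
      rwa [conjTranspose_eq_transpose_of_trivial] at h
    rw [hPt]
  -- the Schur-complement characterization of membership
  have hSchur : ∀ Q : Matrix (Fin n) (Fin n) ℝ,
      (fromBlocks (P - Q) (P * Aᵀ) (A * P) S).PosSemidef ↔
      ((P⁻¹ + Aᵀ * W⁻¹ * A)⁻¹ - Q).PosSemidef := by
    intro Q
    have := PosDef.fromBlocks₂₂ (P - Q) (P * Aᵀ) hS (D := S)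
    rw [hBH] at this
    rw [this]
    have : P - Q - P * Aᵀ * S⁻¹ * (A * P) = (P⁻¹ + Aᵀ * W⁻¹ * A)⁻¹ - Q := by
      rw [hwood]
      simp only [Matrix.mul_assoc]
      abel
    rw [this]
  -- the determinant value
  have hdet : ((P⁻¹ + Aᵀ * W⁻¹ * A)⁻¹).det = P.det * W.det / S.det := by
    have hfac : P⁻¹ + Aᵀ * W⁻¹ * A = P⁻¹ * (1 + P * Aᵀ * W⁻¹ * A) := by
      rw [Matrix.mul_add, Matrix.mul_one]
      congr 1
      simp only [← Matrix.mul_assoc, nonsing_inv_mul P hPu, Matrix.one_mul]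
    have hsyl : (1 + P * Aᵀ * W⁻¹ * A).det = S.det * (W.det)⁻¹ := by
      have h1 : (1 + P * Aᵀ * W⁻¹ * A : Matrix (Fin n) (Fin n) ℝ).det
          = (1 + A * (P * Aᵀ * W⁻¹) : Matrix (Fin m) (Fin m) ℝ).det :=
        det_one_add_mul_comm (P * Aᵀ * W⁻¹) A
      have h2 : (1 + A * (P * Aᵀ * W⁻¹) : Matrix (Fin m) (Fin m) ℝ)
          = S * W⁻¹ := by
        rw [hSdef, Matrix.add_mul, mul_nonsing_inv W hWu]
        simp only [← Matrix.mul_assoc]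
        abel
      rw [h1, h2, det_mul, det_nonsing_inv, Ring.inverse_eq_inv']
    have hdinv : (P⁻¹ + Aᵀ * W⁻¹ * A).det = (P.det)⁻¹ * (S.det * (W.det)⁻¹) := by
      rw [hfac, det_mul, hsyl, det_nonsing_inv, Ring.inverse_eq_inv']
    rw [det_nonsing_inv, Ring.inverse_eq_inv', hdinv]
    have h1 : P.det ≠ 0 := hP.det_pos.ne'
    have h2 : W.det ≠ 0 := hW.det_pos.ne'
    have h3 : S.det ≠ 0 := hS.det_pos.ne'
    field_simp
  -- membership of the optimum
  have hmem : (P⁻¹ + Aᵀ * W⁻¹ * A)⁻¹ ∈ F := by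
    rw [hF]
    refine ⟨hPi0, (hSchur _).mpr ?_⟩
    rw [sub_self]
    exact Matrix.PosSemidef.zero
  refine ⟨⟨⟨_, hmem, hdet⟩, ?_⟩, hmem, hdet⟩
  rintro x ⟨Q, hQ, rfl⟩
  rw [hF] at hQ
  obtain ⟨hQpd, hQblock⟩ := hQ
  rw [hSchur] at hQblock
  calc Q.det ≤ ((P⁻¹ + Aᵀ * W⁻¹ * A)⁻¹).det := aux_det_mono hQpd hQblock
    _ = P.det * W.det / S.det := hdet
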